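/- For all classes a, b ∈ Fin C and all K ∈ ℕ, the class means of the K-th layer embeddings satisfy h̄_a^{(K)} − h̄_b^{(K)} = ((p+q)/(p+(C−1)q))^K · (u_a − u_b). -/

import Mathlib

theorem stmt_2 (C N f : ℕ) (hC : 2 ≤ C) (hN : 0 < N) (hdvd : C ∣ N)
    (y : Fin N → Fin C)
    (hclass : ∀ c : Fin C,
      (Finset.univ.filter (fun i => y i = c)).card = N / C)
    (p q : ℝ) (hp : 0 < p) (hq : 0 < q)
    (u : Fin C → Fin f → ℝ)
    (P : Matrix (Fin N) (Fin N) ℝ)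
    (hP : ∀ i j, P i j =
      if y i = y j then ((C : ℝ) / (N * (p + ((C : ℝ) - 1) * q))) * p
      else -(((C : ℝ) / (N * (p + ((C : ℝ) - 1) * q))) * q))
    (X : Matrix (Fin N) (Fin f) ℝ)
    (hX : ∀ i, X i = u (y i))
    (hbar : Fin C → ℕ → Fin f → ℝ)
    (hhbar : ∀ (c : Fin C) (K : ℕ),
      hbar c K = ((C : ℝ) / N) •
        ∑ i ∈ Finset.univ.filter (fun i => y i = c), (P ^ K * X) i) :
    ∀ (a b : Fin C) (K : ℕ),
      hbar a K - hbar b K =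
        ((p + q) / (p + ((C : ℝ) - 1) * q)) ^ K • (u a - u b) := by
  have hC0 : (C : ℝ) ≠ 0 := by positivity
  have hN0 : (N : ℝ) ≠ 0 := by positivity
  set s : ℝ := p + ((C : ℝ) - 1) * q with hs
  have hC1 : (1 : ℝ) ≤ (C : ℝ) - 1 := by
    have : (2 : ℝ) ≤ (C : ℝ) := by exact_mod_cast hC
    linarith
  have hs0 : 0 < s := by nlinarith
  set α : ℝ := (C : ℝ) / (N * s) with hα
  set r : ℝ := (p + q) / s with hr
  set m : ℕ := N / C with hm
  have hmcast : (m : ℝ) = (N : ℝ) / (C : ℝ) := by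
    rw [hm, Nat.cast_div hdvd hC0]
  have hmα : (m : ℝ) * α = 1 / s := by
    rw [hmcast, hα]; field_simp
  -- key induction
  have key : ∀ K : ℕ, ∃ v : Fin C → Fin f → ℝ,
      (∀ i k, (P ^ K * X) i k = v (y i) k) ∧
      (∀ a b k, v a k - v b k = r ^ K * (u a k - u b k)) := by
    intro K
    induction K with
    | zero =>
      refine ⟨u, ?_, ?_⟩
      · intro i k; rw [pow_zero, Matrix.one_mul, hX i]
      · intro a b k; simp
    | succ K ih =>
      obtain ⟨v, hv1, hv2⟩ := ih
      refine ⟨fun c k => (m : ℝ) * α * (p + q) * v c k -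
          (m : ℝ) * α * q * ∑ c', v c' k, ?_, ?_⟩
      · intro i k
        have : (P ^ (K + 1) * X) i k = ∑ j, P i j * (P ^ K * X) j k := by
          rw [pow_succ', Matrix.mul_assoc]
          simp [Matrix.mul_apply]
        rw [this]
        have hsplit : ∑ j, P i j * (P ^ K * X) j k =
            ∑ c' : Fin C, ∑ j ∈ Finset.univ.filter (fun j => y j = c'),
              P i j * (P ^ K * X) j k :=
          (Finset.sum_fiberwise _ _ _).symm
        rw [hsplit]
        have hinner : ∀ c' : Fin C,
            ∑ j ∈ Finset.univ.filter (fun j => y j = c'),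
              P i j * (P ^ K * X) j k =
            (m : ℝ) * ((if y i = c' then α * p else -(α * q)) * v c' k) := by
          intro c'
          rw [Finset.sum_congr rfl (fun j hj => ?_), Finset.sum_const,
            hclass c', nsmul_eq_mul]
          have hyj : y j = c' := by simpa using hj
          rw [hP i j, hv1 j k, hyj, hα]
        simp only [hinner]
        have hif : ∀ c' : Fin C, (m : ℝ) * ((if y i = c' then α * p else -(α * q)) * v c' k)
            = (m : ℝ) * α * (p + q) * (if y i = c' then v c' k else 0)
              - (m : ℝ) * α * q * v c' k := by
          intro c'
          by_cases h : y i = c' <;> simp [h] <;> ring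
        simp only [hif]
        rw [Finset.sum_sub_distrib, ← Finset.mul_sum, ← Finset.mul_sum,
          Finset.sum_ite_eq (Finset.univ : Finset (Fin C)) (y i) (fun c' => v c' k)]
        simp
      · intro a b k
        have := hv2 a b k
        have h1 : (m : ℝ) * α * (p + q) * v a k - (m : ℝ) * α * q * ∑ c', v c' k -
            ((m : ℝ) * α * (p + q) * v b k - (m : ℝ) * α * q * ∑ c', v c' k)
            = (m : ℝ) * α * (p + q) * (v a k - v b k) := by ring
        rw [h1, hmα, this, hr, pow_succ]
        field_simp
  intro a b K
  obtain ⟨v, hv1, hv2⟩ := key K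
  funext k
  have hcm : ∀ c : Fin C, hbar c K k = ((C : ℝ) / N) * ((m : ℝ) * v c k) := by
    intro c
    rw [hhbar c K]
    simp only [Pi.smul_apply, Finset.sum_apply, smul_eq_mul]
    erw [Finset.sum_apply]
    congr 1
    rw [Finset.sum_congr rfl (fun i hi => ?_), Finset.sum_const, hclass c,
      nsmul_eq_mul]
    have hyi : y i = c := by simpa using hi
    rw [hv1 i k, hyi]
  have hcoef : (C : ℝ) / N * (m : ℝ) = 1 := by
    rw [hmcast]; field_simp
  simp only [Pi.sub_apply, Pi.smul_apply, smul_eq_mul]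
  rw [hcm a, hcm b, ← mul_sub, ← mul_sub, ← mul_assoc, hcoef, one_mul, hv2 a b k, hr]
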